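/- The Feldman-Katok pseudodistance f̃_δ for a flow is invariant along orbits: if z is in the orbit of x (i.e., z = φ^r(x) for some r ∈ ℝ), then f̃_δ(z,y) = f̃_δ(x,y) for every y ∈ X and δ > 0. -/

import Mathlib

open MeasureTheory Filter Set Topology
open scoped ENNReal symmDiff

section FK

structure IsFlow {X : Type*} [TopologicalSpace X] (Φ : ℝ → X → X) : Prop where
  cont : Continuous fun p : ℝ × X => Φ p.1 p.2
  map_zero : ∀ x, Φ 0 x = x
  map_add : ∀ t s x, Φ (t + s) x = Φ s (Φ t x)

variable {X : Type*} [MetricSpace X]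

/-- `x` and `y` are `(t,ε,δ)`-matchable: there are measurable `A, A' ⊆ [0,t]` of Lebesgue
measure `> (1-ε)t` and an increasing absolutely continuous onto map `h : A → A'`
(with a.e. derivative `h'`) with `|h' - 1| < ε` and `d(φ^s x, φ^{h s} y) < δ` on `A`. -/
def Matchable (Φ : ℝ → X → X) (x y : X) (t ε δ : ℝ) : Prop :=
  ∃ (A A' : Set ℝ) (h h' : ℝ → ℝ),
    MeasurableSet A ∧ MeasurableSet A' ∧
    A ⊆ Icc 0 t ∧ A' ⊆ Icc 0 t ∧
    ENNReal.ofReal ((1 - ε) * t) < volume A ∧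
    ENNReal.ofReal ((1 - ε) * t) < volume A' ∧
    MapsTo h A A' ∧ SurjOn h A A' ∧ StrictMonoOn h A ∧
    (∀ B ⊆ A, MeasurableSet B → volume (h '' B) = ENNReal.ofReal (∫ s in B, h' s)) ∧
    (∀ s ∈ A, |h' s - 1| < ε) ∧
    (∀ s ∈ A, dist (Φ s x) (Φ (h s) y) < δ)

/-- The `(t,δ)`-gap `f̃_{t,δ}(x,y)`; by convention it equals `1` when no matching exists. -/
noncomputable def fkGap (Φ : ℝ → X → X) (t δ : ℝ) (x y : X) : ℝ :=
  sInf ({ε : ℝ | 0 < ε ∧ Matchable Φ x y t ε δ} ∪ {1})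

/-- `f̃_δ(x,y) = limsup_{t → ∞} f̃_{t,δ}(x,y)`. -/
noncomputable def fkDist (Φ : ℝ → X → X) (δ : ℝ) (x y : X) : ℝ :=
  Filter.limsup (fun t => fkGap Φ t δ x y) Filter.atTop

/-- The Feldman–Katok pseudometric for flows. -/
noncomputable def rhoFK (Φ : ℝ → X → X) (x y : X) : ℝ :=
  sInf {δ : ℝ | 0 < δ ∧ fkDist Φ δ x y < δ}

/-- Discrete `(n,δ)`-matching of cardinality `k` for a map `T`. -/
def DMatching (T : X → X) (x y : X) (n : ℕ) (δ : ℝ) (k : ℕ) : Prop :=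
  ∃ (D D' : Finset ℕ) (π : ℕ → ℕ),
    D ⊆ Finset.range n ∧ D' ⊆ Finset.range n ∧ D.card = k ∧
    Set.BijOn π ↑D ↑D' ∧ StrictMonoOn π ↑D ∧
    ∀ i ∈ D, dist (T^[i] x) (T^[π i] y) < δ

/-- The discrete `(n,δ)`-gap `f̄_{n,δ}(x,y)`. -/
noncomputable def dGap (T : X → X) (n : ℕ) (δ : ℝ) (x y : X) : ℝ :=
  1 - ((sSup {k : ℕ | DMatching T x y n δ k} : ℕ) : ℝ) / n

/-- `f̄_δ(x,y) = limsup_{n → ∞} f̄_{n,δ}(x,y)`. -/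
noncomputable def dFKdist (T : X → X) (δ : ℝ) (x y : X) : ℝ :=
  Filter.limsup (fun n : ℕ => dGap T n δ x y) Filter.atTop

/-- The discrete Feldman–Katok pseudometric. -/
noncomputable def dRhoFK (T : X → X) (x y : X) : ℝ :=
  sInf {δ : ℝ | 0 < δ ∧ dFKdist T δ x y ≤ δ}

variable [MeasurableSpace X] [BorelSpace X]

/-- The `t`-empirical measure `μ_{x,t} = (1/t) ∫_0^t δ_{φ^s x} ds`. -/
noncomputable def empMeasure (Φ : ℝ → X → X) (x : X) (t : ℝ) : Measure X :=
  (ENNReal.ofReal (1 / t)) • Measure.map (fun s => Φ s x) (volume.restrict (Icc 0 t))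

/-- `x` is generic for `μ`: empirical measures converge to `μ` in the weak* topology. -/
def Generic (Φ : ℝ → X → X) (μ : Measure X) (x : X) : Prop :=
  ∀ f : C(X, ℝ), Tendsto (fun t => ∫ z, f z ∂(empMeasure Φ x t)) atTop (𝓝 (∫ z, f z ∂μ))

def FlowInvariant (Φ : ℝ → X → X) (μ : Measure X) : Prop :=
  ∀ t : ℝ, MeasurePreserving (Φ t) μ μ

def FlowErgodic (Φ : ℝ → X → X) (μ : Measure X) : Prop :=
  FlowInvariant Φ μ ∧
    ∀ A : Set X, MeasurableSet A → (∀ t, Φ t ⁻¹' A = A) → μ A = 0 ∨ μ A = 1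

/-- The Prokhorov metric. -/
noncomputable def prokhorov (μ ν : Measure X) : ℝ :=
  sInf {ε : ℝ | 0 < ε ∧ ∀ B : Set X, MeasurableSet B →
    μ B ≤ ν (Metric.thickening ε B) + ENNReal.ofReal ε}

/-- A finite Borel partition of `X`, indexed by `ℕ` with all but finitely many cells empty. -/
structure BPartition (X : Type*) [MeasurableSpace X] where
  cells : ℕ → Set X
  measurable : ∀ j, MeasurableSet (cells j)
  disj : Pairwise (Function.onFun Disjoint cells)
  cover : ⋃ j, cells j = Set.univ
  finite : ∃ n, ∀ j, n ≤ j → cells j = ∅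

/-- The partition pseudometric `d_μ(P,Q)` (infimum over orderings of
`μ {x : P(x) ≠ Q(x)}`). -/
noncomputable def dPart (μ : Measure X) (P Q : ℕ → Set X) : ℝ :=
  ⨅ σ : Equiv.Perm ℕ, (μ (⋃ j, P j \ Q (σ j))).toReal

/-- `(t,ε,P)`-matchability with respect to a partition `P` (Ratner). -/
def PMatchable (Φ : ℝ → X → X) (P : ℕ → Set X) (x y : X) (t ε : ℝ) : Prop :=
  ∃ (A A' : Set ℝ) (h h' : ℝ → ℝ),
    MeasurableSet A ∧ MeasurableSet A' ∧
    A ⊆ Icc 0 t ∧ A' ⊆ Icc 0 t ∧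
    ENNReal.ofReal ((1 - ε) * t) < volume A ∧
    ENNReal.ofReal ((1 - ε) * t) < volume A' ∧
    MapsTo h A A' ∧ SurjOn h A A' ∧ StrictMonoOn h A ∧
    (∀ B ⊆ A, MeasurableSet B → volume (h '' B) = ENNReal.ofReal (∫ s in B, h' s)) ∧
    (∀ s ∈ A, |h' s - 1| < ε) ∧
    (∀ s ∈ A, ∀ j, Φ s x ∈ P j ↔ Φ (h s) y ∈ P j)

/-- `f_t(x,y,P)`. -/
noncomputable def fPart (Φ : ℝ → X → X) (P : ℕ → Set X) (t : ℝ) (x y : X) : ℝ :=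
  sInf ({ε : ℝ | 0 < ε ∧ PMatchable Φ P x y t ε} ∪ {1})

/-- The `(t,P)`-ball of radius `ε` centered at `x`. -/
def PBall (Φ : ℝ → X → X) (P : ℕ → Set X) (t ε : ℝ) (x : X) : Set X :=
  {y | fPart Φ P t x y < ε}

/-- `K_t(ε,P)`: minimal cardinality of an `(ε,t,P)`-cover (`⊤` if none exists). -/
noncomputable def Kt (μ : Measure X) (Φ : ℝ → X → X) (P : ℕ → Set X) (ε t : ℝ) : ℝ≥0∞ :=
  sInf ((fun C : Finset X => (C.card : ℝ≥0∞)) ''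
    {C : Finset X | ENNReal.ofReal (1 - ε) < μ (⋃ x ∈ C, PBall Φ P t ε x)})

/-- `β(u,ε,P) = liminf_{t→∞} log K_t(ε,P) / u(t)`. -/
noncomputable def betaU (μ : Measure X) (Φ : ℝ → X → X) (P : ℕ → Set X) (u : ℝ → ℝ)
    (ε : ℝ) : EReal :=
  Filter.liminf (fun t => ENNReal.log (Kt μ Φ P ε t) / (ENNReal.ofReal (u t) : EReal))
    Filter.atTop

/-- `e(u,P) = limsup_{ε→0⁺} β(u,ε,P)`. -/
noncomputable def eUP (μ : Measure X) (Φ : ℝ → X → X) (P : ℕ → Set X) (u : ℝ → ℝ) : EReal :=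
  Filter.limsup (fun ε => betaU μ Φ P u ε) (𝓝[>] (0 : ℝ))

/-- `e(Φ,u) = sup_P e(u,P)`. -/
noncomputable def ePhi (μ : Measure X) (Φ : ℝ → X → X) (u : ℝ → ℝ) : EReal :=
  ⨆ P : BPartition X, eUP μ Φ P.cells u

end FK



section AuxProof
open Filter

variable {X : Type*} [MetricSpace X]

lemma cut_meas {A : Set ℝ} {h : ℝ → ℝ} (hA : MeasurableSet A) (hb : BddAbove A)
    (hm : StrictMonoOn h A) (d : ℝ) : MeasurableSet {s ∈ A | h s ≤ d} := by
  set S := {s ∈ A | h s ≤ d} with hS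
  have hSA : S ⊆ A := fun s hs => hs.1
  rcases eq_empty_or_nonempty S with he | hne
  · rw [he]; exact MeasurableSet.empty
  have hbS : BddAbove S := hb.mono hSA
  by_cases hcS : sSup S ∈ S
  · have : S = A ∩ Iic (sSup S) := by
      apply Subset.antisymm
      · exact fun s hs => ⟨hs.1, le_csSup hbS hs⟩
      · rintro s ⟨hsA, hsc⟩
        refine ⟨hsA, ?_⟩
        rcases (mem_Iic.mp hsc).lt_or_eq with h1 | h1
        · exact le_trans (hm hsA hcS.1 h1).le hcS.2
        · rw [h1]; exact hcS.2
    rw [this]; exact hA.inter measurableSet_Iic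
  · have : S = A ∩ Iio (sSup S) := by
      apply Subset.antisymm
      · exact fun s hs => ⟨hs.1, lt_of_le_of_ne (le_csSup hbS hs)
          (fun h : s = sSup S => hcS (h ▸ hs))⟩
      · rintro s ⟨hsA, hsc⟩
        obtain ⟨s', hs'S, hss'⟩ := exists_lt_of_lt_csSup hne (mem_Iio.mp hsc)
        exact ⟨hsA, le_trans (hm hsA hs'S.1 hss').le hs'S.2⟩
    rw [this]; exact hA.inter measurableSet_Iio

lemma image_cut {A A' : Set ℝ} {h : ℝ → ℝ} (hmaps : MapsTo h A A') (hsurj : SurjOn h A A')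
    (p : ℝ → Prop) : h '' {s ∈ A | p (h s)} = {a ∈ A' | p a} := by
  apply Subset.antisymm
  · rintro a ⟨s, ⟨hsA, hps⟩, rfl⟩; exact ⟨hmaps hsA, hps⟩
  · rintro a ⟨haA', hpa⟩
    obtain ⟨s, hsA, rfl⟩ := hsurj haA'
    exact ⟨s, ⟨hsA, hpa⟩, rfl⟩

lemma integral_bounds {A B : Set ℝ} {h' : ℝ → ℝ} {ε : ℝ} (hBm : MeasurableSet B) (hBA : B ⊆ A)
    (hint : IntegrableOn h' A volume) (hfin : volume B ≠ ⊤) (hbd : ∀ s ∈ A, |h' s - 1| < ε) :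
    (1 - ε) * (volume B).toReal ≤ ∫ s in B, h' s ∧
      (∫ s in B, h' s) ≤ (1 + ε) * (volume B).toReal := by
  have h1 : IntegrableOn h' B volume := hint.mono_set hBA
  have hc : ∀ c : ℝ, IntegrableOn (fun _ => c) B volume :=
    fun c => integrableOn_const hfin
  constructor
  · have hle := setIntegral_mono_on (hc (1 - ε)) h1 hBm
      (fun s hs => by have := abs_lt.mp (hbd s (hBA hs)); linarith)
    rw [setIntegral_const, smul_eq_mul, mul_comm] at hle
    exact hle
  · have hle := setIntegral_mono_on h1 (hc (1 + ε)) hBm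
      (fun s hs => by have := abs_lt.mp (hbd s (hBA hs)); linarith)
    rw [setIntegral_const, smul_eq_mul, mul_comm] at hle
    exact hle

lemma fkGap_mem_nonneg (Φ : ℝ → X → X) (t δ : ℝ) (x y : X) :
    ∀ a ∈ ({ε : ℝ | 0 < ε ∧ Matchable Φ x y t ε δ} ∪ {1} : Set ℝ), (0:ℝ) ≤ a := by
  rintro a (⟨ha, -⟩ | ha)
  · exact ha.le
  · rw [Set.mem_singleton_iff] at ha; rw [ha]; norm_num

lemma fkGap_nonneg (Φ : ℝ → X → X) (t δ : ℝ) (x y : X) : 0 ≤ fkGap Φ t δ x y := by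
  apply Real.sInf_nonneg
  exact fkGap_mem_nonneg Φ t δ x y

lemma fkGap_cobdd (Φ : ℝ → X → X) (δ : ℝ) (x y : X) :
    Filter.IsCoboundedUnder (· ≤ ·) Filter.atTop (fun t => fkGap Φ t δ x y) :=
  Filter.isCoboundedUnder_le_of_le Filter.atTop (x := 0) (fun t => fkGap_nonneg Φ t δ x y)

lemma fkGap_le_one (Φ : ℝ → X → X) (t δ : ℝ) (x y : X) : fkGap Φ t δ x y ≤ 1 :=
  csInf_le ⟨0, fkGap_mem_nonneg Φ t δ x y⟩ (Set.mem_union_right _ (Set.mem_singleton 1))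

lemma fkGap_le_of_matchable {Φ : ℝ → X → X} {x y : X} {t ε δ : ℝ} (hε : 0 < ε)
    (hM : Matchable Φ x y t ε δ) : fkGap Φ t δ x y ≤ ε :=
  csInf_le ⟨0, fkGap_mem_nonneg Φ t δ x y⟩ (Set.mem_union_left _ ⟨hε, hM⟩)

lemma matchable_mono {Φ : ℝ → X → X} {x y : X} {t δ ε₀ ε₁ : ℝ} (ht : 0 ≤ t) (hle : ε₀ ≤ ε₁)
    (hM : Matchable Φ x y t ε₀ δ) : Matchable Φ x y t ε₁ δ := by
  obtain ⟨A, A', h, h', h1, h2, h3, h4, h5, h6, h7, h8, h9, h10, h11, h12⟩ := hM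
  have hth : ENNReal.ofReal ((1 - ε₁) * t) ≤ ENNReal.ofReal ((1 - ε₀) * t) :=
    ENNReal.ofReal_le_ofReal (mul_le_mul_of_nonneg_right (by linarith) ht)
  exact ⟨A, A', h, h', h1, h2, h3, h4, lt_of_le_of_lt hth h5, lt_of_le_of_lt hth h6,
    h7, h8, h9, h10, fun s hs => lt_of_lt_of_le (h11 s hs) hle, h12⟩

lemma matchable_of_fkGap_lt {Φ : ℝ → X → X} {x y : X} {t ε δ : ℝ} (ht : 0 ≤ t)
    (hlt : fkGap Φ t δ x y < ε) (hε1 : ε ≤ 1) : Matchable Φ x y t ε δ := by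
  obtain ⟨a, haS, halt⟩ := exists_lt_of_csInf_lt
    ⟨1, Set.mem_union_right _ (Set.mem_singleton 1)⟩ hlt
  rcases haS with ⟨ha0, hM⟩ | ha
  · exact matchable_mono ht halt.le hM
  · rw [Set.mem_singleton_iff] at ha
    rw [ha] at halt; linarith

lemma matchable_forward {Φ : ℝ → X → X} (hΦ : IsFlow Φ) {x y : X} {t ε δ r : ℝ}
    (hr : 0 < r) (ht : 0 < t) (hε : 0 < ε) (hε1 : ε < 1)
    (hε' : ε + 2 * r / ((1 - ε) * t) < 1) (hM : Matchable Φ x y t ε δ) :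
    Matchable Φ (Φ r x) y t (ε + 2 * r / ((1 - ε) * t)) δ := by
  obtain ⟨A, A', h, h', hAm, hA'm, hAsub, hA'sub, hvA, hvA', hmaps, hsurj, hmono, hvim,
    hder, hdist⟩ := hM
  set ε' := ε + 2 * r / ((1 - ε) * t) with hε'def
  have h1ε : 0 < 1 - ε := by linarith
  have hpos : 0 < 2 * r / ((1 - ε) * t) := div_pos (by linarith) (mul_pos h1ε ht)
  have hεε' : ε < ε' := by rw [hε'def]; linarith
  have hIccA : volume (Icc (0:ℝ) t) ≠ ⊤ := by simp [Real.volume_Icc]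
  have hAfin : volume A ≠ ⊤ := ne_top_of_le_ne_top hIccA (measure_mono hAsub)
  have hA'fin : volume A' ≠ ⊤ := ne_top_of_le_ne_top hIccA (measure_mono hA'sub)
  have himA : h '' A = A' := Subset.antisymm (Set.mapsTo_iff_image_subset.mp hmaps) hsurj
  have hInt : IntegrableOn h' A volume := by
    by_contra hni
    rw [← himA, hvim A Subset.rfl hAm, integral_undef hni, ENNReal.ofReal_zero] at hvA'
    exact ENNReal.not_lt_zero hvA'
  set D := A ∩ Iio r with hDdef
  set c := sSup (h '' D) with hcdef
  have hDA : D ⊆ A := inter_subset_left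
  have hDm : MeasurableSet D := hAm.inter measurableSet_Iio
  have himD_sub : h '' D ⊆ A' := himA ▸ Set.image_mono hDA
  have hcub : ∀ s ∈ A, s < r → h s ≤ c :=
    fun s hs hsr => le_csSup (bddAbove_Icc.mono (himD_sub.trans hA'sub)) ⟨s, ⟨hs, hsr⟩, rfl⟩
  set S0 := {s ∈ A | h s ≤ c} with hS0def
  have hS0m : MeasurableSet S0 := cut_meas hAm (bddAbove_Icc.mono hAsub) hmono c
  set B := {s ∈ A | c < h s} with hBdef
  have hBeq : B = A \ S0 := by
    ext s
    simp only [hBdef, hS0def, Set.mem_setOf_eq, Set.mem_diff]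
    constructor
    · rintro ⟨h1, h2⟩; exact ⟨h1, fun hh => absurd hh.2 (not_le.mpr h2)⟩
    · rintro ⟨h1, h2⟩; exact ⟨h1, not_le.mp (fun hle => h2 ⟨h1, hle⟩)⟩
  have hBm : MeasurableSet B := hBeq ▸ hAm.diff hS0m
  have hBA : B ⊆ A := fun s hs => hs.1
  have hS0A : S0 ⊆ A := fun s hs => hs.1
  have himS0 : h '' S0 = A' ∩ Iic c := by
    have := image_cut hmaps hsurj (fun a => a ≤ c)
    rw [hS0def]; rw [this]; rfl
  have himB : h '' B = A' ∩ Ioi c := by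
    have := image_cut hmaps hsurj (fun a => c < a)
    rw [hBdef]; rw [this]; rfl
  have hDsub : D ⊆ Ico 0 r := fun s hs => ⟨(hAsub hs.1).1, hs.2⟩
  have hDfin : volume D ≠ ⊤ :=
    ne_top_of_le_ne_top (by simp [Real.volume_Ico]) (measure_mono hDsub)
  have hDvol : (volume D).toReal ≤ r := by
    have h1 := measure_mono (μ := volume) hDsub
    rw [Real.volume_Ico, sub_zero] at h1
    calc (volume D).toReal ≤ (ENNReal.ofReal r).toReal :=
          ENNReal.toReal_mono ENNReal.ofReal_ne_top h1
      _ ≤ r := by rw [ENNReal.toReal_ofReal hr.le]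
  have hintD := integral_bounds hDm hDA hInt hDfin hder
  have hcut_sub : A' ∩ Iic c ⊆ (h '' D) ∪ {c} := by
    rintro a ⟨haA', hac⟩
    obtain ⟨s, hsA, rfl⟩ := hsurj haA'
    by_cases hsr : s < r
    · exact Or.inl ⟨s, ⟨hsA, hsr⟩, rfl⟩
    · right
      rcases (h '' D).eq_empty_or_nonempty with hemp | hne
      · have hc0 : c = 0 := by rw [hcdef, hemp, Real.sSup_empty]
        have h0 : 0 ≤ h s := (hA'sub haA').1
        have : h s ≤ 0 := hc0 ▸ (mem_Iic.mp hac)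
        rw [Set.mem_singleton_iff, hc0]
        linarith
      · have hub : ∀ b ∈ h '' D, b ≤ h s := by
          rintro b ⟨s', hs'D, rfl⟩
          exact (hmono (hDA hs'D) hsA (lt_of_lt_of_le hs'D.2 (not_lt.mp hsr))).le
        exact Set.mem_singleton_iff.mpr (le_antisymm (mem_Iic.mp hac) (csSup_le hne hub))
  have hintD_nonneg : 0 ≤ ∫ s in D, h' s :=
    le_trans (mul_nonneg h1ε.le ENNReal.toReal_nonneg) hintD.1
  have hvol_cut : (volume (A' ∩ Iic c)).toReal ≤ (1 + ε) * r := by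
    have h1 : volume (A' ∩ Iic c) ≤ volume (h '' D) + volume ({c} : Set ℝ) :=
      le_trans (measure_mono hcut_sub) (measure_union_le _ _)
    rw [measure_singleton, add_zero] at h1
    have h2 : volume (h '' D) = ENNReal.ofReal (∫ s in D, h' s) := hvim D hDA hDm
    have h3 : (volume (A' ∩ Iic c)).toReal ≤ (volume (h '' D)).toReal :=
      ENNReal.toReal_mono (by rw [h2]; exact ENNReal.ofReal_ne_top) h1
    refine le_trans h3 ?_
    rw [h2, ENNReal.toReal_ofReal hintD_nonneg]
    calc (∫ s in D, h' s) ≤ (1 + ε) * (volume D).toReal := hintD.2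
      _ ≤ (1 + ε) * r := mul_le_mul_of_nonneg_left hDvol (by linarith)
  have hS0fin : volume S0 ≠ ⊤ := ne_top_of_le_ne_top hAfin (measure_mono hS0A)
  have hBfin : volume B ≠ ⊤ := ne_top_of_le_ne_top hAfin (measure_mono hBA)
  have hintS0 := integral_bounds hS0m hS0A hInt hS0fin hder
  have hintS0_nonneg : 0 ≤ ∫ s in S0, h' s :=
    le_trans (mul_nonneg h1ε.le ENNReal.toReal_nonneg) hintS0.1
  have hS0vol : (volume S0).toReal ≤ 2 * r / (1 - ε) := by
    have him : volume (h '' S0) = ENNReal.ofReal (∫ s in S0, h' s) := hvim S0 hS0A hS0m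
    have h3 : ∫ s in S0, h' s ≤ (1 + ε) * r := by
      have h4 : (volume (h '' S0)).toReal ≤ (1 + ε) * r := by rw [himS0]; exact hvol_cut
      rwa [him, ENNReal.toReal_ofReal hintS0_nonneg] at h4
    rw [le_div_iff₀ h1ε]
    nlinarith [hintS0.1, ENNReal.toReal_nonneg (a := volume S0)]
  have hAvol : (1 - ε) * t < (volume A).toReal :=
    (ENNReal.ofReal_lt_iff_lt_toReal (mul_nonneg h1ε.le ht.le) hAfin).mp hvA
  have hA'vol : (1 - ε) * t < (volume A').toReal :=
    (ENNReal.ofReal_lt_iff_lt_toReal (mul_nonneg h1ε.le ht.le) hA'fin).mp hvA'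
  have hsplitA : (volume A).toReal = (volume S0).toReal + (volume B).toReal := by
    have h1 : volume (A ∩ S0) + volume (A \ S0) = volume A := measure_inter_add_diff A hS0m
    rw [Set.inter_eq_right.mpr hS0A] at h1
    rw [← hBeq] at h1
    rw [← h1, ENNReal.toReal_add hS0fin hBfin]
  have hid : (1 - ε') * t = (1 - ε) * t - 2 * r / (1 - ε) := by
    rw [hε'def]; field_simp; ring
  have hBvol : (1 - ε') * t < (volume B).toReal := by
    rw [hid]; linarith
  have hsplitA' : (volume A').toReal =
      (volume (A' ∩ Iic c)).toReal + (volume (A' ∩ Ioi c)).toReal := by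
    have h1 : volume (A' ∩ Iic c) + volume (A' \ Iic c) = volume A' :=
      measure_inter_add_diff A' measurableSet_Iic
    have h2 : A' \ Iic c = A' ∩ Ioi c := by rw [Set.diff_eq, Set.compl_Iic]
    rw [h2] at h1
    rw [← h1, ENNReal.toReal_add
      (ne_top_of_le_ne_top hA'fin (measure_mono inter_subset_left))
      (ne_top_of_le_ne_top hA'fin (measure_mono inter_subset_left))]
  have hA'cutfin : volume (A' ∩ Ioi c) ≠ ⊤ :=
    ne_top_of_le_ne_top hA'fin (measure_mono inter_subset_left)
  have h2r : (1 + ε) * r ≤ 2 * r / (1 - ε) := by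
    rw [le_div_iff₀ h1ε]; nlinarith [mul_nonneg hr.le (sq_nonneg ε)]
  have hA'cutvol : (1 - ε') * t < (volume (A' ∩ Ioi c)).toReal := by
    rw [hid]; linarith
  have hε'nonneg : 0 ≤ (1 - ε') * t := mul_nonneg (by linarith) ht.le
  refine ⟨(fun s => s + r) ⁻¹' B, A' ∩ Ioi c, fun s => h (s + r), fun s => h' (s + r),
    hBm.preimage (measurable_add_const r), hA'm.inter measurableSet_Ioi,
    ?_, ?_, ?_, ?_, ?_, ?_, ?_, ?_, ?_, ?_⟩
  · intro s hs
    have hsB : s + r ∈ B := hs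
    have hsA : s + r ∈ A := hBA hsB
    have h0 : ¬ (s + r < r) := fun hlt => absurd (hcub _ hsA hlt) (not_le.mpr hsB.2)
    exact ⟨by linarith [not_lt.mp h0], by linarith [(hAsub hsA).2]⟩
  · exact fun a ha => ⟨(hA'sub ha.1).1, (hA'sub ha.1).2⟩
  · rw [measure_preimage_add_right]
    exact (ENNReal.ofReal_lt_iff_lt_toReal hε'nonneg hBfin).mpr hBvol
  · exact (ENNReal.ofReal_lt_iff_lt_toReal hε'nonneg hA'cutfin).mpr hA'cutvol
  · intro s hs
    have hsB : s + r ∈ B := hs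
    exact ⟨hmaps hsB.1, hsB.2⟩
  · intro a ha
    rw [← himB] at ha
    obtain ⟨b, hbB, rfl⟩ := ha
    refine ⟨b - r, ?_, ?_⟩
    · show b - r + r ∈ B
      rwa [sub_add_cancel]
    · show h (b - r + r) = h b
      rw [sub_add_cancel]
  · intro s1 h1 s2 h2 hlt
    have h1' : s1 + r ∈ B := h1
    have h2' : s2 + r ∈ B := h2
    exact hmono (hBA h1') (hBA h2') (add_lt_add_left hlt r)
  · intro B0 hB0sub hB0m
    have me := (Homeomorph.addRight r).measurableEmbedding
    have hE : (fun s => s + r) '' B0 ⊆ A := by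
      rintro u ⟨s, hs, rfl⟩
      exact hBA (hB0sub hs)
    have hEm : MeasurableSet ((fun s => s + r) '' B0) := me.measurableSet_image.mpr hB0m
    have h1 : (fun s => h (s + r)) '' B0 = h '' ((fun s => s + r) '' B0) :=
      (Set.image_image h (fun s => s + r) B0).symm
    rw [h1, hvim _ hE hEm]
    congr 1
    calc ∫ s in (fun s => s + r) '' B0, h' s
        = ∫ s in (fun s => s + r) '' B0, h' s ∂(Measure.map (fun y => y + r) volume) := by
          rw [map_add_right_eq_self]
      _ = ∫ s in (fun y => y + r) ⁻¹' ((fun s => s + r) '' B0), h' (s + r) :=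
          me.setIntegral_map h' _
      _ = ∫ s in B0, h' (s + r) := by
          rw [Set.preimage_image_eq B0 (add_left_injective r)]
  · intro s hs
    exact lt_trans (hder _ (hBA hs)) hεε'
  · intro s hs
    have hsA : s + r ∈ A := hBA hs
    have heq : Φ s (Φ r x) = Φ (s + r) x := by
      rw [add_comm]; exact (hΦ.map_add r s x).symm
    rw [heq]
    exact hdist (s + r) hsA

lemma matchable_backward {Φ : ℝ → X → X} (hΦ : IsFlow Φ) {x y : X} {t ε δ r : ℝ}
    (hr : 0 < r) (hrt : r < t) (hε : 0 ≤ ε)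
    (hM : Matchable Φ (Φ r x) y (t - r) ε δ) : Matchable Φ x y t (ε + r / t) δ := by
  obtain ⟨A, A', h, h', hAm, hA'm, hAsub, hA'sub, hvA, hvA', hmaps, hsurj, hmono, hvim,
    hder, hdist⟩ := hM
  have ht : 0 < t := hr.trans hrt
  have hεε' : ε < ε + r / t := by
    have : 0 < r / t := div_pos hr ht
    linarith
  have hth : ENNReal.ofReal ((1 - (ε + r / t)) * t) ≤ ENNReal.ofReal ((1 - ε) * (t - r)) := by
    apply ENNReal.ofReal_le_ofReal
    have hidq : (1 - (ε + r / t)) * t = (1 - ε) * t - r := by field_simp; ring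
    rw [hidq]
    nlinarith
  refine ⟨(fun s => s + (-r)) ⁻¹' A, A', fun s => h (s + (-r)), fun s => h' (s + (-r)),
    hAm.preimage (measurable_add_const (-r)), hA'm, ?_, ?_, ?_, ?_, ?_, ?_, ?_, ?_, ?_, ?_⟩
  · intro s hs
    have hsA : s + (-r) ∈ A := hs
    have := hAsub hsA
    exact ⟨by linarith [this.1], by linarith [this.2]⟩
  · exact hA'sub.trans (Set.Icc_subset_Icc_right (by linarith))
  · rw [measure_preimage_add_right]
    exact lt_of_le_of_lt hth hvA
  · exact lt_of_le_of_lt hth hvA'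
  · exact fun s hs => hmaps hs
  · intro a ha
    obtain ⟨s, hsA, rfl⟩ := hsurj ha
    refine ⟨s + r, ?_, ?_⟩
    · show s + r + -r ∈ A
      rwa [add_neg_cancel_right]
    · show h (s + r + -r) = h s
      rw [add_neg_cancel_right]
  · intro s1 h1 s2 h2 hlt
    have h1' : s1 + -r ∈ A := h1
    have h2' : s2 + -r ∈ A := h2
    exact hmono h1' h2' (add_lt_add_left hlt (-r))
  · intro B0 hB0sub hB0m
    have me := (Homeomorph.addRight (-r)).measurableEmbedding
    have hE : (fun s => s + (-r)) '' B0 ⊆ A := by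
      rintro u ⟨s, hs, rfl⟩
      exact hB0sub hs
    have hEm : MeasurableSet ((fun s => s + (-r)) '' B0) := me.measurableSet_image.mpr hB0m
    have h1 : (fun s => h (s + (-r))) '' B0 = h '' ((fun s => s + (-r)) '' B0) :=
      (Set.image_image h (fun s => s + (-r)) B0).symm
    rw [h1, hvim _ hE hEm]
    congr 1
    calc ∫ s in (fun s => s + (-r)) '' B0, h' s
        = ∫ s in (fun s => s + (-r)) '' B0, h' s ∂(Measure.map (fun y => y + (-r)) volume) := by
          rw [map_add_right_eq_self]
      _ = ∫ s in (fun y => y + (-r)) ⁻¹' ((fun s => s + (-r)) '' B0), h' (s + (-r)) :=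
          me.setIntegral_map h' _
      _ = ∫ s in B0, h' (s + (-r)) := by
          rw [Set.preimage_image_eq B0 (add_left_injective (-r))]
  · intro s hs
    exact lt_trans (hder _ hs) hεε'
  · intro s hs
    have heq : Φ s x = Φ (s + (-r)) (Φ r x) := by
      have e : r + (s + (-r)) = s := by ring
      rw [← hΦ.map_add, e]
    rw [heq]
    exact hdist (s + (-r)) hs

lemma fkDist_le_one (Φ : ℝ → X → X) (δ : ℝ) (x y : X) : fkDist Φ δ x y ≤ 1 :=
  limsup_le_of_le (fkGap_cobdd Φ δ x y)
    (Eventually.of_forall (fun t => fkGap_le_one Φ t δ x y))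

lemma fkDist_nonneg (Φ : ℝ → X → X) (δ : ℝ) (x y : X) : 0 ≤ fkDist Φ δ x y :=
  le_limsup_of_frequently_le (Frequently.of_forall (fun t => fkGap_nonneg Φ t δ x y))
    (isBoundedUnder_of ⟨1, fun t => fkGap_le_one Φ t δ x y⟩)

lemma fkDist_shift_le {Φ : ℝ → X → X} (hΦ : IsFlow Φ) (x y : X) (δ : ℝ) {r : ℝ}
    (hr : 0 < r) : fkDist Φ δ (Φ r x) y ≤ fkDist Φ δ x y := by
  apply le_of_forall_pos_le_add
  intro η hη
  rcases le_or_gt 1 (fkDist Φ δ x y + η) with h1 | h1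
  · exact le_trans (fkDist_le_one Φ δ (Φ r x) y) h1
  set ε := fkDist Φ δ x y + η with hεdef
  have hε1 : ε < 1 := h1
  have hε0 : 0 < ε := add_pos_of_nonneg_of_pos (fkDist_nonneg Φ δ x y) hη
  have h1ε : 0 < 1 - ε := by linarith
  have hbd : IsBoundedUnder (· ≤ ·) atTop (fun t => fkGap Φ t δ x y) :=
    isBoundedUnder_of ⟨1, fun t => fkGap_le_one Φ t δ x y⟩
  have hev1 : ∀ᶠ t in atTop, fkGap Φ t δ x y < ε :=
    eventually_lt_of_limsup_lt (lt_add_of_pos_right _ hη) hbd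
  have htend : Tendsto (fun t => ε + 2 * r / ((1 - ε) * t)) atTop (𝓝 ε) := by
    have h2 : Tendsto (fun t : ℝ => 2 * r / ((1 - ε) * t)) atTop (𝓝 0) :=
      Tendsto.div_atTop tendsto_const_nhds (Tendsto.const_mul_atTop h1ε tendsto_id)
    simpa using tendsto_const_nhds.add h2
  have hev3 : ∀ᶠ t in atTop, ε + 2 * r / ((1 - ε) * t) < 1 := htend.eventually_lt_const hε1
  have key : ∀ᶠ t in atTop, fkGap Φ t δ (Φ r x) y ≤ ε + 2 * r / ((1 - ε) * t) := by
    filter_upwards [hev1, hev3, eventually_gt_atTop (0:ℝ)] with t h1t h3t h0t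
    have hM := matchable_of_fkGap_lt h0t.le h1t hε1.le
    have hM' := matchable_forward hΦ hr h0t hε0 hε1 h3t hM
    exact fkGap_le_of_matchable
      (add_pos hε0 (div_pos (by linarith) (mul_pos h1ε h0t))) hM'
  calc fkDist Φ δ (Φ r x) y ≤ limsup (fun t => ε + 2 * r / ((1 - ε) * t)) atTop :=
        limsup_le_limsup key (fkGap_cobdd Φ δ (Φ r x) y) htend.isBoundedUnder_le
    _ = ε := htend.limsup_eq

lemma fkDist_shift_ge {Φ : ℝ → X → X} (hΦ : IsFlow Φ) (x y : X) (δ : ℝ) {r : ℝ}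
    (hr : 0 < r) : fkDist Φ δ x y ≤ fkDist Φ δ (Φ r x) y := by
  apply le_of_forall_pos_le_add
  intro η hη
  rcases le_or_gt 1 (fkDist Φ δ (Φ r x) y + η) with h1 | h1
  · exact le_trans (fkDist_le_one Φ δ x y) h1
  set ε := fkDist Φ δ (Φ r x) y + η with hεdef
  have hε1 : ε < 1 := h1
  have hε0 : 0 < ε := add_pos_of_nonneg_of_pos (fkDist_nonneg Φ δ (Φ r x) y) hη
  have hbd : IsBoundedUnder (· ≤ ·) atTop (fun t => fkGap Φ t δ (Φ r x) y) :=
    isBoundedUnder_of ⟨1, fun t => fkGap_le_one Φ t δ (Φ r x) y⟩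
  have hev1 : ∀ᶠ T in atTop, fkGap Φ T δ (Φ r x) y < ε :=
    eventually_lt_of_limsup_lt (lt_add_of_pos_right _ hη) hbd
  have hshift : Tendsto (fun t : ℝ => t - r) atTop atTop := by
    simpa [sub_eq_add_neg] using tendsto_atTop_add_const_right atTop (-r) tendsto_id
  have hev1' : ∀ᶠ t in atTop, fkGap Φ (t - r) δ (Φ r x) y < ε := hshift.eventually hev1
  have htend : Tendsto (fun t : ℝ => ε + r / t) atTop (𝓝 ε) := by
    have h2 : Tendsto (fun t : ℝ => r / t) atTop (𝓝 0) :=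
      Tendsto.div_atTop tendsto_const_nhds tendsto_id
    simpa using tendsto_const_nhds.add h2
  have key : ∀ᶠ t in atTop, fkGap Φ t δ x y ≤ ε + r / t := by
    filter_upwards [hev1', eventually_gt_atTop r] with t h1t hrt
    have h0t : 0 < t := hr.trans hrt
    have hM := matchable_of_fkGap_lt (by linarith : (0:ℝ) ≤ t - r) h1t hε1.le
    have hM' := matchable_backward hΦ hr hrt hε0.le hM
    exact fkGap_le_of_matchable (add_pos hε0 (div_pos hr h0t)) hM'
  calc fkDist Φ δ x y ≤ limsup (fun t : ℝ => ε + r / t) atTop :=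
        limsup_le_limsup key (fkGap_cobdd Φ δ x y) htend.isBoundedUnder_le
    _ = ε := htend.limsup_eq

end AuxProof

theorem stmt3 {X : Type*} [MetricSpace X] [CompactSpace X] (Φ : ℝ → X → X) (hΦ : IsFlow Φ) (x z : X)
    (r : ℝ) (hz : z = Φ r x) :
    ∀ (y : X) (δ : ℝ), 0 < δ → fkDist Φ δ z y = fkDist Φ δ x y := by
  intro y δ _
  rcases lt_trichotomy r 0 with hr | hr | hr
  · have hx : x = Φ (-r) z := by
      rw [hz, ← hΦ.map_add, add_neg_cancel, hΦ.map_zero]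
    have hrpos : 0 < -r := by linarith
    have h1 := fkDist_shift_le hΦ z y δ hrpos
    have h2 := fkDist_shift_ge hΦ z y δ hrpos
    rw [← hx] at h1 h2
    exact le_antisymm h2 h1
  · rw [hz, hr, hΦ.map_zero]
  · rw [hz]
    exact le_antisymm (fkDist_shift_le hΦ x y δ hr) (fkDist_shift_ge hΦ x y δ hr)
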